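/- Let x, y, θ, p_x, p_y, p_θ : ℝ → ℝ be differentiable functions satisfying x' = p_x, y' = p_y, θ' = p_θ, p_x' = −x, p_y' = −y, p_θ' = 0. Then at every time t: (i) if p_x(t) ≠ 0, the function s ↦ arctan(x(s)/p_x(s)) has derivative 1 at t; (ii) if p_y(t) ≠ 0, the function s ↦ arctan(y(s)/p_y(s)) has derivative 1 at t; (iii) if p_θ(t) ≠ 0, the function s ↦ θ(s)/p_θ(s) has derivative 1 at t. -/

import Mathlib

lemma arctan_ratio_unit (u v : ℝ → ℝ)
    (hu : Differentiable ℝ u) (hv : Differentiable ℝ v)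
    (hu' : ∀ t, deriv u t = v t) (hv' : ∀ t, deriv v t = -u t)
    (t : ℝ) (hvt : v t ≠ 0) :
    HasDerivAt (fun s => Real.arctan (u s / v s)) 1 t := by
  have hdiv : HasDerivAt (fun s => u s / v s)
      ((v t * v t - u t * (-u t)) / (v t)^2) t := by
    have h1 : HasDerivAt u (v t) t := hu' t ▸ (hu t).hasDerivAt
    have h2 : HasDerivAt v (-u t) t := hv' t ▸ (hv t).hasDerivAt
    exact h1.div h2 hvt
  have harc := (Real.hasDerivAt_arctan (u t / v t)).comp t hdiv
  refine harc.congr_deriv ?_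
  have hv2 : (v t)^2 ≠ 0 := pow_ne_zero 2 hvt
  field_simp
  ring
theorem disk_angle_coordinates_unit_velocity
    (x y θ px py pθ : ℝ → ℝ)
    (hx : Differentiable ℝ x) (hy : Differentiable ℝ y) (hθ : Differentiable ℝ θ)
    (hpx : Differentiable ℝ px) (hpy : Differentiable ℝ py) (hpθ : Differentiable ℝ pθ)
    (hx' : ∀ t, deriv x t = px t) (hy' : ∀ t, deriv y t = py t)
    (hθ' : ∀ t, deriv θ t = pθ t)
    (hpx' : ∀ t, deriv px t = -x t) (hpy' : ∀ t, deriv py t = -y t)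
    (hpθ' : ∀ t, deriv pθ t = 0) :
    ∀ t : ℝ,
      (px t ≠ 0 → HasDerivAt (fun s => Real.arctan (x s / px s)) 1 t) ∧
      (py t ≠ 0 → HasDerivAt (fun s => Real.arctan (y s / py s)) 1 t) ∧
      (pθ t ≠ 0 → HasDerivAt (fun s => θ s / pθ s) 1 t) := by
  intro t
  refine ⟨fun h => arctan_ratio_unit x px hx hpx hx' hpx' t h,
          fun h => arctan_ratio_unit y py hy hpy hy' hpy' t h,
          fun h => ?_⟩
  have h1 : HasDerivAt θ (pθ t) t := hθ' t ▸ (hθ t).hasDerivAt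
  have h2 : HasDerivAt pθ 0 t := hpθ' t ▸ (hpθ t).hasDerivAt
  have := h1.div h2 h
  refine this.congr_deriv ?_
  field_simp
  ring
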